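/- arXiv:1703.04427 — 2 statements merged into one kernel-verified Lean document; each statement's English description precedes it below -/
import Mathlib

section
/- In a cop-win graph G of corner rank α ≥ 2, no vertex of corner rank α−1 dominates the set X_{α−1} of all vertices of corner rank α−1; that is, no vertex b of corner rank α−1 is adjacent (in the reflexive sense) to every vertex of corner rank α−1. -/
namespace CopsRobbers

variable {V : Type*}

/-- The closed neighborhood of `v` within the vertex set `S` (graphs are reflexive,
so `v` itself belongs to its closed neighborhood). -/
def closedNbhd (G : SimpleGraph V) (S : Set V) (v : V) : Set V :=
  {u | u ∈ S ∧ (u = v ∨ G.Adj u v)}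

/-- `v` is a strict corner of the subgraph induced on `S`: some other vertex `w ∈ S`
strictly corners `v`, i.e. `N[v] ⊊ N[w]` within `S`. -/
def StrictCorner (G : SimpleGraph V) (S : Set V) (v : V) : Prop :=
  v ∈ S ∧ ∃ w ∈ S, w ≠ v ∧ closedNbhd G S v ⊂ closedNbhd G S w

/-- The remaining vertex sets of the corner ranking procedure (0-indexed auxiliary
version): at each step all current strict corners are removed. -/
def stageAux (G : SimpleGraph V) : ℕ → Set V
  | 0 => Set.univ
  | n + 1 => stageAux G n \ {v | StrictCorner G (stageAux G n) v}

/-- `stage G k` is the vertex set of `G^(k)` (for `k ≥ 1`), so `stage G 1 = V(G)`. -/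
def stage (G : SimpleGraph V) (k : ℕ) : Set V := stageAux G (k - 1)

/-- The corner rank of a vertex: the least `k ≥ 1` such that `v` is a strict corner
of `G^(k)`, or `G^(k)` is a clique still containing `v`; and `⊤` (that is, `∞`) if
there is no such `k`. -/
noncomputable def cornerRank (G : SimpleGraph V) (v : V) : ℕ∞ :=
  sInf {k : ℕ∞ | ∃ n : ℕ, k = (n : ℕ∞) ∧ 1 ≤ n ∧
    (StrictCorner G (stage G n) v ∨ (G.IsClique (stage G n) ∧ v ∈ stage G n))}

/-- The corner rank of a graph: the largest corner rank of a vertex. -/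
noncomputable def graphRank (G : SimpleGraph V) : ℕ∞ := ⨆ v, cornerRank G v

/-- A graph is cop-win iff every vertex has finite corner rank. -/
def CopWin (G : SimpleGraph V) : Prop := ∀ v, cornerRank G v ≠ ⊤

/-- `v` dominates the set `S`: `v` is (reflexively) adjacent to every vertex of `S`. -/
def Dominates (G : SimpleGraph V) (v : V) (S : Set V) : Prop :=
  ∀ u ∈ S, u = v ∨ G.Adj v u

/-- A cop-win graph of corner rank `α ≥ 2` is `tp1` if some vertex of corner rank `α`
dominates the vertex set of `G^(α-1)`. -/
def Tp1 (G : SimpleGraph V) : Prop :=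
  ∃ α : ℕ, 2 ≤ α ∧ graphRank G = (α : ℕ∞) ∧
    ∃ v, cornerRank G v = (α : ℕ∞) ∧ Dominates G v (stage G (α - 1))

/-- `G` realizes the vector `(x_α, …, x_1)` (written as the list `[x_α, …, x_1]`):
`G` is cop-win of corner rank `α` and for each `k`, `x_k` is the number of vertices
of corner rank `k`. -/
def Realizes (G : SimpleGraph V) (x : List ℕ) : Prop :=
  CopWin G ∧ graphRank G = (x.length : ℕ∞) ∧
  ∀ i : Fin x.length,
    x.get i = {v | cornerRank G v = ((x.length - (i : ℕ) : ℕ) : ℕ∞)}.ncard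

/-- `G` r-realizes `x` (for `r ∈ {0,1}`): `G` realizes `x` and `G` is tp-r. -/
def RRealizes (G : SimpleGraph V) (r : ℕ) (x : List ℕ) : Prop :=
  Realizes G x ∧ (Tp1 G ↔ r = 1)

/-- A vector is realizable if it is the rank cardinality vector of some finite cop-win graph. -/
def Realizable (x : List ℕ) : Prop :=
  ∃ (W : Type) (_ : Fintype W) (G : SimpleGraph W), Realizes G x

/-- A vector is r-realizable if some finite tp-r cop-win graph realizes it. -/
def RRealizable (r : ℕ) (x : List ℕ) : Prop :=
  ∃ (W : Type) (_ : Fintype W) (G : SimpleGraph W), RRealizes G r x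

open Classical in
/-- The capture time of a cop-win graph: `cr(G) - r(G)`. -/
noncomputable def captureTime (G : SimpleGraph V) : ℕ :=
  (graphRank G).toNat - (if Tp1 G then 1 else 0)

end CopsRobbers

namespace CopsRobbers

variable {V : Type*} {G : SimpleGraph V}

def Cond (G : SimpleGraph V) (n : ℕ) (v : V) : Prop :=
  StrictCorner G (stage G n) v ∨ (G.IsClique (stage G n) ∧ v ∈ stage G n)

lemma cornerRank_le {n : ℕ} {v : V} (hn : 1 ≤ n) (h : Cond G n v) :
    cornerRank G v ≤ (n : ℕ∞) := sInf_le ⟨n, rfl, hn, h⟩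

lemma cornerRank_spec {r : ℕ} {v : V} (h : cornerRank G v = (r : ℕ∞)) :
    1 ≤ r ∧ Cond G r v ∧ ∀ m, 1 ≤ m → m < r → ¬ Cond G m v := by
  have hne : {k : ℕ∞ | ∃ n : ℕ, k = (n : ℕ∞) ∧ 1 ≤ n ∧ Cond G n v}.Nonempty := by
    by_contra hc
    rw [Set.not_nonempty_iff_eq_empty] at hc
    have : cornerRank G v = ⊤ := by
      rw [cornerRank]
      rw [show {k : ℕ∞ | ∃ n : ℕ, k = (n : ℕ∞) ∧ 1 ≤ n ∧
        (StrictCorner G (stage G n) v ∨ (G.IsClique (stage G n) ∧ v ∈ stage G n))} = ∅ from hc]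
      simp
    rw [h] at this
    exact (ENat.coe_ne_top r) this
  have hmem := csInf_mem hne
  rw [show sInf {k : ℕ∞ | ∃ n : ℕ, k = (n : ℕ∞) ∧ 1 ≤ n ∧ Cond G n v} = cornerRank G v
    from rfl, h] at hmem
  obtain ⟨n, hn1, hn2, hn3⟩ := hmem
  obtain rfl : r = n := by exact_mod_cast hn1
  refine ⟨hn2, hn3, fun m hm1 hm2 hcond => ?_⟩
  have := cornerRank_le hm1 hcond
  rw [h] at this
  have : r ≤ m := by exact_mod_cast this
  omega

lemma stageAux_subset (G : SimpleGraph V) {m n : ℕ} (h : m ≤ n) :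
    stageAux G n ⊆ stageAux G m := by
  induction n with
  | zero => simp_all
  | succ k ih =>
    rcases Nat.lt_or_ge m (k + 1) with h' | h'
    · exact Set.diff_subset.trans (ih (Nat.lt_succ_iff.mp h'))
    · have : m = k + 1 := le_antisymm h h'
      subst this; exact subset_rfl

lemma mem_stageAux_of_rank {r m : ℕ} {v : V} (h : cornerRank G v = (r : ℕ∞)) (hm : m < r) :
    v ∈ stageAux G m := by
  induction m with
  | zero => trivial
  | succ k ih =>
    have hk : v ∈ stageAux G k := ih (by omega)
    refine ⟨hk, ?_⟩
    intro hsc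
    exact (cornerRank_spec h).2.2 (k + 1) (by omega) hm (Or.inl hsc)

lemma exists_corner_of_not_mem {m : ℕ} {v : V} (h : v ∉ stageAux G m) :
    ∃ j < m, StrictCorner G (stageAux G j) v := by
  induction m with
  | zero => exact absurd trivial h
  | succ k ih =>
    by_cases hk : v ∈ stageAux G k
    · refine ⟨k, Nat.lt_succ_self k, ?_⟩
      by_contra hsc
      exact h ⟨hk, hsc⟩
    · obtain ⟨j, hj, hsc⟩ := ih hk
      exact ⟨j, hj.trans (Nat.lt_succ_self k), hsc⟩

lemma cornerRank_le_of_not_mem {m : ℕ} {v : V} (h : v ∉ stageAux G m) :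
    cornerRank G v ≤ (m : ℕ∞) := by
  obtain ⟨j, hj, hsc⟩ := exists_corner_of_not_mem h
  have hc : Cond G (j + 1) v := Or.inl hsc
  exact (cornerRank_le (by omega) hc).trans (by exact_mod_cast Nat.succ_le_of_lt hj)

lemma not_clique_stage {a m : ℕ} (hrank : graphRank G = (a : ℕ∞)) (hm : 1 ≤ m)
    (hma : m < a) : ¬ G.IsClique (stage G m) := by
  intro hcl
  have hall : ∀ v, cornerRank G v ≤ (m : ℕ∞) := by
    intro v
    by_cases hv : v ∈ stage G m
    · exact cornerRank_le hm (Or.inr ⟨hcl, hv⟩)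
    · exact (cornerRank_le_of_not_mem hv).trans (by exact_mod_cast Nat.sub_le m 1)
  have : graphRank G ≤ (m : ℕ∞) := iSup_le hall
  rw [hrank] at this
  have : a ≤ m := by exact_mod_cast this
  omega

lemma lt_rank_of_mem_stageAux {a m r : ℕ} (hrank : graphRank G = (a : ℕ∞)) (hma : m < a)
    {v : V} (hv : v ∈ stageAux G m) (hr : cornerRank G v = (r : ℕ∞)) : m < r := by
  by_contra hcon
  push_neg at hcon
  obtain ⟨h1, hcond, -⟩ := cornerRank_spec hr
  rcases hcond with hsc | ⟨hcl, -⟩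
  · have hne : v ∉ stageAux G r := by
      have he : stageAux G r = stageAux G (r - 1) \ {u | StrictCorner G (stageAux G (r - 1)) u} := by
        conv_lhs => rw [show r = (r - 1) + 1 by omega]
        rfl

      rw [he]
      intro hmem
      exact hmem.2 hsc
    exact hne (stageAux_subset G hcon hv)
  · exact not_clique_stage hrank h1 (by omega) hcl

end CopsRobbers

/-- in a cop-win graph of corner rank `α ≥ 2`, no vertex of corner rank
`α - 1` dominates the set of all vertices of corner rank `α - 1`. -/
theorem CopsRobbers.no_rank_pred_dominates
    {V : Type} [Fintype V] (G : SimpleGraph V) (α : ℕ) (hα : 2 ≤ α)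
    (hG : CopsRobbers.CopWin G) (hrank : CopsRobbers.graphRank G = (α : ℕ∞))
    (b : V) (hb : CopsRobbers.cornerRank G b = ((α - 1 : ℕ) : ℕ∞)) :
    ¬ CopsRobbers.Dominates G b
        {v | CopsRobbers.cornerRank G v = ((α - 1 : ℕ) : ℕ∞)} := by
  open CopsRobbers in
  intro hdom
  obtain ⟨s, rfl⟩ : ∃ s, α = s + 1 := ⟨α - 1, by omega⟩
  have hs1 : 1 ≤ s := by omega
  have hb' : cornerRank G b = (s : ℕ∞) := hb
  set S : Set V := stage G s with hSdef
  -- b is in S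
  have hbS : b ∈ S := mem_stageAux_of_rank hb' (show s - 1 < s by omega)
  -- stage s is not a clique
  have hnotcl : ¬ G.IsClique S := not_clique_stage hrank hs1 (by omega)
  -- every vertex of S has rank s or s+1
  have hrankS : ∀ u ∈ S, ∃ r : ℕ, cornerRank G u = (r : ℕ∞) ∧ (r = s ∨ r = s + 1) := by
    intro u hu
    obtain ⟨r, hr⟩ := WithTop.ne_top_iff_exists.mp (hG u)
    have hr' : cornerRank G u = (r : ℕ∞) := hr.symm
    have h1 : s - 1 < r := lt_rank_of_mem_stageAux hrank (by omega) hu hr'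
    have h2 : cornerRank G u ≤ ((s + 1 : ℕ) : ℕ∞) := by
      rw [← hrank]; exact le_iSup (fun v => cornerRank G v) u
    rw [hr'] at h2
    have h2' : r ≤ s + 1 := by exact_mod_cast h2
    exact ⟨r, hr', by omega⟩
  -- b is a strict corner of S
  have hscb : StrictCorner G S b := by
    obtain ⟨-, hcond, -⟩ := cornerRank_spec hb'
    rcases hcond with h | ⟨h, -⟩
    · exact h
    · exact absurd h hnotcl
  obtain ⟨-, w, hwS, hwb, hsub⟩ := hscb
  classical
  -- a maximal strict cornerer of b
  set T : Set V := {u | u ∈ S ∧ closedNbhd G S b ⊂ closedNbhd G S u} with hTdef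
  obtain ⟨c, hcT, hcmax⟩ := Set.Finite.exists_maximalFor
    (fun u => closedNbhd G S u) T (Set.toFinite T) ⟨w, hwS, hsub⟩
  have hcS : c ∈ S := hcT.1
  have hcnb : closedNbhd G S b ⊂ closedNbhd G S c := hcT.2
  have hcns : ¬ StrictCorner G S c := by
    rintro ⟨-, w', hw'S, hw'c, hlt⟩
    exact (Set.ssubset_def.mp hlt).2 (hcmax ⟨hw'S, hcnb.trans hlt⟩ hlt.le)
  -- c has rank s+1
  obtain ⟨rc, hrc, hrc'⟩ := hrankS c hcS
  have hrcα : cornerRank G c = ((s + 1 : ℕ) : ℕ∞) := by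
    rcases hrc' with h | h
    · exfalso
      rw [h] at hrc
      obtain ⟨-, hcond, -⟩ := cornerRank_spec hrc
      rcases hcond with hsc | ⟨hcl, -⟩
      · exact hcns hsc
      · exact hnotcl hcl
    · rw [h] at hrc; exact hrc
  have hcα : c ∈ stageAux G s := mem_stageAux_of_rank hrcα (by omega)
  -- stage (s+1) is a clique
  have hclα : G.IsClique (stageAux G s) := by
    by_contra hncl
    have hcor : ∀ u ∈ stageAux G s, StrictCorner G (stageAux G s) u := by
      intro u hu
      obtain ⟨r, hr⟩ := WithTop.ne_top_iff_exists.mp (hG u)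
      have hr' : cornerRank G u = (r : ℕ∞) := hr.symm
      have h1 : s < r := lt_rank_of_mem_stageAux hrank (by omega) hu hr'
      have h2 : cornerRank G u ≤ ((s + 1 : ℕ) : ℕ∞) := by
        rw [← hrank]; exact le_iSup (fun v => cornerRank G v) u
      rw [hr'] at h2
      have h2' : r ≤ s + 1 := by exact_mod_cast h2
      obtain rfl : r = s + 1 := by omega
      obtain ⟨-, hcond, -⟩ := cornerRank_spec hr'
      rcases hcond with hsc | ⟨hcl, -⟩
      · exact hsc
      · exact absurd hcl hncl
    obtain ⟨d, hdm, hdmax⟩ := Set.Finite.exists_maximalFor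
      (fun u => closedNbhd G (stageAux G s) u) (stageAux G s) (Set.toFinite _) ⟨c, hcα⟩
    obtain ⟨-, w', hw'S, hw'd, hlt⟩ := hcor d hdm
    exact (Set.ssubset_def.mp hlt).2 (hdmax hw'S hlt.le)
  -- c dominates all of S
  have hNc : closedNbhd G S c = S := by
    refine Set.Subset.antisymm (fun u hu => hu.1) (fun u huS => ?_)
    obtain ⟨r, hr, hr'⟩ := hrankS u huS
    rcases hr' with h | h
    · rw [h] at hr
      have := hdom u hr
      exact hcnb.le ⟨huS, this.imp id (fun hadj => hadj.symm)⟩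
    · rw [h] at hr
      have huα : u ∈ stageAux G s := mem_stageAux_of_rank hr (by omega)
      by_cases huc : u = c
      · exact ⟨huS, Or.inl huc⟩
      · exact ⟨huS, Or.inr (hclα huα hcα huc)⟩
  -- every vertex of S is in the closed neighborhood of b
  have hSb : S ⊆ closedNbhd G S b := by
    intro a haS
    obtain ⟨r, hr, hr'⟩ := hrankS a haS
    rcases hr' with h | h
    · rw [h] at hr
      exact ⟨haS, (hdom a hr).imp id (fun hadj => hadj.symm)⟩
    · rw [h] at hr
      obtain ⟨-, -, hmin⟩ := cornerRank_spec hr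
      have hna : ¬ StrictCorner G S a := fun hsc => hmin s hs1 (by omega) (Or.inl hsc)
      have hbNc : b ∈ closedNbhd G S c := by rw [hNc]; exact hbS
      by_cases hac : a = c
      · subst hac
        exact ⟨haS, hbNc.2.imp (fun he => he.symm) (fun hadj => hadj.symm)⟩
      · have hle : closedNbhd G S a ⊆ closedNbhd G S c := by
          rw [hNc]; exact fun u hu => hu.1
        have heq : closedNbhd G S a = closedNbhd G S c := by
          by_contra hne
          exact hna ⟨haS, c, hcS, fun he => hac he.symm, hle.ssubset_of_ne hne⟩
        have : b ∈ closedNbhd G S a := by rw [heq]; exact hbNc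
        exact ⟨haS, this.2.imp (fun he => he.symm) (fun hadj => hadj.symm)⟩
  exact hcnb.not_subset (Set.Subset.trans (fun u hu => hu.1) hSb)
end

section
/- For every α ≥ 2, the vector (1, 2, ..., 2, 1) of length α (first and last entries 1, all other entries 2) is not realizable: no cop-win graph has this as its rank cardinality vector. -/
namespace CopsRobbers

variable {V : Type*}

/-! ### Auxiliary development for Statement 9 -/

section Statement9

variable (G : SimpleGraph V)

lemma stage_succ (n : ℕ) : stage G (n + 1) = stageAux G n := by simp [stage]

lemma stageAux_succ_subset (n : ℕ) : stageAux G (n + 1) ⊆ stageAux G n :=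
  fun _ hv => hv.1

lemma stageAux_le {m n : ℕ} (h : m ≤ n) : stageAux G n ⊆ stageAux G m := by
  induction n with
  | zero => simp_all
  | succ n ih =>
    rcases Nat.lt_or_ge m (n + 1) with h' | h'
    · exact (stageAux_succ_subset G n).trans (ih (by omega))
    · have : m = n + 1 := by omega
      subst this; rfl

lemma diff_eq_corners (n : ℕ) :
    stageAux G n \ stageAux G (n + 1) = {v | StrictCorner G (stageAux G n) v} := by
  ext v
  constructor
  · rintro ⟨h1, h2⟩
    by_contra hc
    exact h2 ⟨h1, hc⟩
  · intro hc
    exact ⟨hc.1, fun hmem => hmem.2 hc⟩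

lemma corner_of_diff {n : ℕ} {v : V} (h1 : v ∈ stageAux G n) (h2 : v ∉ stageAux G (n + 1)) :
    StrictCorner G (stageAux G n) v := by
  have := diff_eq_corners G n
  exact (Set.ext_iff.mp this v).mp ⟨h1, h2⟩

lemma closedNbhd_subset (S : Set V) (v : V) : closedNbhd G S v ⊆ S := fun _ h => h.1

lemma closedNbhd_mono {S S' : Set V} (h : S ⊆ S') (v : V) :
    closedNbhd G S v ⊆ closedNbhd G S' v := fun u hu => ⟨h hu.1, hu.2⟩

lemma self_mem_closedNbhd {S : Set V} {v : V} (hv : v ∈ S) : v ∈ closedNbhd G S v :=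
  ⟨hv, Or.inl rfl⟩

lemma exists_noncorner_dominator [Fintype V] {S : Set V} {v : V} (hv : StrictCorner G S v) :
    ∃ y ∈ S, ¬ StrictCorner G S y ∧ closedNbhd G S v ⊂ closedNbhd G S y := by
  classical
  set D := {y | y ∈ S ∧ closedNbhd G S v ⊂ closedNbhd G S y} with hD
  have hne : D.Nonempty := by
    obtain ⟨hvS, w, hwS, hwne, hss⟩ := hv
    exact ⟨w, hwS, hss⟩
  obtain ⟨y, hyD, hymax⟩ :=
    Set.Finite.exists_maximalFor (fun y => (closedNbhd G S y).ncard) D (Set.toFinite D) hne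
  refine ⟨y, hyD.1, ?_, hyD.2⟩
  rintro ⟨hyS, z, hzS, hzne, hzss⟩
  have hzD : z ∈ D := ⟨hzS, hyD.2.trans hzss⟩
  have hlt : (closedNbhd G S y).ncard < (closedNbhd G S z).ncard :=
    Set.ncard_lt_ncard hzss (Set.toFinite _)
  have : (closedNbhd G S z).ncard ≤ (closedNbhd G S y).ncard := @hymax z hzD (le_of_lt hlt)
  omega

/-! #### Corner rank versus stages -/

def Good (G : SimpleGraph V) (m : ℕ) (v : V) : Prop :=
  StrictCorner G (stageAux G m) v ∨ (G.IsClique (stageAux G m) ∧ v ∈ stageAux G m)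

lemma cornerRank_def (v : V) : cornerRank G v =
    sInf {k : ℕ∞ | ∃ n : ℕ, k = (n : ℕ∞) ∧ 1 ≤ n ∧
      (StrictCorner G (stage G n) v ∨ (G.IsClique (stage G n) ∧ v ∈ stage G n))} := rfl

lemma mem_rset_iff {v : V} {m : ℕ} :
    (((m + 1 : ℕ) : ℕ∞) ∈ {k : ℕ∞ | ∃ n : ℕ, k = (n : ℕ∞) ∧ 1 ≤ n ∧
      (StrictCorner G (stage G n) v ∨ (G.IsClique (stage G n) ∧ v ∈ stage G n))}) ↔
    Good G m v := by
  constructor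
  · rintro ⟨n, hn, h1, h⟩
    have hn' : n = m + 1 := by exact_mod_cast hn.symm
    subst hn'
    rwa [stage_succ] at h
  · intro h
    exact ⟨m + 1, rfl, by omega, by rwa [stage_succ]⟩

lemma rank_le_of_good {v : V} {m : ℕ} (h : Good G m v) :
    cornerRank G v ≤ ((m + 1 : ℕ) : ℕ∞) := by
  rw [cornerRank_def]
  exact sInf_le ((mem_rset_iff G).mpr h)

lemma exists_drop {v : V} {m : ℕ} (h : v ∉ stageAux G m) :
    ∃ j < m, v ∈ stageAux G j ∧ v ∉ stageAux G (j + 1) := by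
  induction m with
  | zero => exact absurd (Set.mem_univ v) h
  | succ m ih =>
    by_cases hm : v ∈ stageAux G m
    · exact ⟨m, lt_add_one m, hm, h⟩
    · obtain ⟨j, hj, h1, h2⟩ := ih hm
      exact ⟨j, hj.trans (lt_add_one m), h1, h2⟩

lemma rank_le_of_not_mem {v : V} {m : ℕ} (h : v ∉ stageAux G m) :
    cornerRank G v ≤ (m : ℕ∞) := by
  obtain ⟨j, hj, h1, h2⟩ := exists_drop G h
  calc cornerRank G v ≤ ((j + 1 : ℕ) : ℕ∞) :=
        rank_le_of_good G (Or.inl (corner_of_diff G h1 h2))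
    _ ≤ (m : ℕ∞) := by exact_mod_cast hj

lemma not_corner_of_mem_ge {v : V} {j m : ℕ} (hjm : j < m) (h : v ∈ stageAux G m) :
    ¬ StrictCorner G (stageAux G j) v := by
  intro hc
  have hmem : v ∈ stageAux G (j + 1) := stageAux_le G (by omega) h
  exact hmem.2 hc

lemma rank_eq_of {v : V} {m : ℕ} (hg : Good G m v) (hmin : ∀ j < m, ¬ Good G j v) :
    cornerRank G v = ((m + 1 : ℕ) : ℕ∞) := by
  refine le_antisymm (rank_le_of_good G hg) ?_
  rw [cornerRank_def]
  refine le_sInf ?_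
  rintro k ⟨n, rfl, h1, hk⟩
  obtain ⟨j, rfl⟩ : ∃ j, n = j + 1 := ⟨n - 1, by omega⟩
  rw [stage_succ] at hk
  by_contra hlt
  push_neg at hlt
  have hjm : j < m := by
    have := (Nat.cast_lt (α := ℕ∞)).mp hlt
    omega
  exact hmin j hjm hk

lemma enat_coe_of_ne_top {a : ℕ∞} (h : a ≠ ⊤) : ∃ m : ℕ, a = (m : ℕ∞) := by
  obtain ⟨m, hm⟩ := WithTop.ne_top_iff_exists.mp h
  exact ⟨m, hm.symm⟩

lemma enat_sInf_mem {A : Set ℕ∞} (h : A.Nonempty) : sInf A ∈ A := by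
  by_cases hA : ∃ n : ℕ, (n : ℕ∞) ∈ A
  · obtain ⟨n, hn⟩ := hA
    have hB : {m : ℕ | (m : ℕ∞) ∈ A}.Nonempty := ⟨n, hn⟩
    have hmem := Nat.sInf_mem hB
    have heq : sInf A = ((sInf {m : ℕ | (m : ℕ∞) ∈ A} : ℕ) : ℕ∞) := by
      apply le_antisymm
      · exact sInf_le hmem
      · apply le_sInf
        intro b hb
        by_cases hbt : b = ⊤
        · simp [hbt]
        · obtain ⟨m, rfl⟩ := enat_coe_of_ne_top hbt
          exact_mod_cast Nat.sInf_le hb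
    rw [heq]; exact hmem
  · obtain ⟨a, ha⟩ := h
    have hat : a = ⊤ := by
      by_contra hne
      obtain ⟨m, rfl⟩ := enat_coe_of_ne_top hne
      exact hA ⟨m, ha⟩
    subst hat
    have : A = {⊤} := by
      apply Set.eq_singleton_iff_unique_mem.mpr
      refine ⟨ha, fun b hb => ?_⟩
      by_contra hne
      obtain ⟨m, rfl⟩ := enat_coe_of_ne_top hne
      exact hA ⟨m, hb⟩
    rw [this]
    simp

lemma rank_set_nonempty {v : V} (h : cornerRank G v ≠ ⊤) :
    {k : ℕ∞ | ∃ n : ℕ, k = (n : ℕ∞) ∧ 1 ≤ n ∧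
      (StrictCorner G (stage G n) v ∨ (G.IsClique (stage G n) ∧ v ∈ stage G n))}.Nonempty := by
  by_contra hne
  rw [Set.not_nonempty_iff_eq_empty] at hne
  rw [cornerRank_def, hne] at h
  simp at h

lemma rank_finite_form {v : V} (h : cornerRank G v ≠ ⊤) :
    ∃ m : ℕ, cornerRank G v = ((m + 1 : ℕ) : ℕ∞) := by
  have hne := rank_set_nonempty G h
  have hmem := enat_sInf_mem hne
  rw [← cornerRank_def] at hmem
  obtain ⟨n, hn, h1, _⟩ := hmem
  exact ⟨n - 1, by rw [hn]; congr 1; omega⟩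

lemma rank_attained {v : V} {m : ℕ} (h : cornerRank G v = ((m + 1 : ℕ) : ℕ∞)) :
    Good G m v ∧ ∀ j < m, ¬ Good G j v := by
  have hne : cornerRank G v ≠ ⊤ := by rw [h]; exact WithTop.coe_ne_top
  have hmem := enat_sInf_mem (rank_set_nonempty G hne)
  rw [← cornerRank_def, h] at hmem
  refine ⟨(mem_rset_iff G).mp hmem, fun j hj hgj => ?_⟩
  have hle := rank_le_of_good G hgj
  rw [h] at hle
  have : m + 1 ≤ j + 1 := by exact_mod_cast hle
  omega

lemma no_early_clique {α : ℕ} (hrank : graphRank G = (α : ℕ∞)) {m : ℕ} (hm : m < α - 1) :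
    ¬ G.IsClique (stageAux G m) := by
  intro hclq
  have hub : ∀ w, cornerRank G w ≤ ((m + 1 : ℕ) : ℕ∞) := by
    intro w
    by_cases hw : w ∈ stageAux G m
    · exact rank_le_of_good G (Or.inr ⟨hclq, hw⟩)
    · exact (rank_le_of_not_mem G hw).trans (by exact_mod_cast Nat.le_succ m)
  have hle : graphRank G ≤ ((m + 1 : ℕ) : ℕ∞) := iSup_le hub
  rw [hrank] at hle
  have : α ≤ m + 1 := by exact_mod_cast hle
  omega

lemma rank_top_set {α : ℕ} (hcop : CopWin G) (hrank : graphRank G = (α : ℕ∞)) (hα : 2 ≤ α) :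
    {v | cornerRank G v = (α : ℕ∞)} = stageAux G (α - 1) := by
  ext v
  constructor
  · intro hv
    have hv' : cornerRank G v = (((α - 1) + 1 : ℕ) : ℕ∞) := by
      rw [hv]; congr 1; omega
    rcases (rank_attained G hv').1 with h | h
    · exact h.1
    · exact h.2
  · intro hv
    obtain ⟨m, hm⟩ := rank_finite_form G (hcop v)
    have hgood := (rank_attained G hm).1
    have hle : cornerRank G v ≤ (α : ℕ∞) := by
      rw [← hrank]; exact le_iSup _ v
    have hmle : m + 1 ≤ α := by
      rw [hm] at hle; exact_mod_cast hle
    have hmeq : m = α - 1 := by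
      by_contra hne
      have hmlt : m < α - 1 := by omega
      rcases hgood with h | h
      · exact not_corner_of_mem_ge G hmlt hv h
      · exact no_early_clique G hrank hmlt h.1
    have hfin : (α - 1) + 1 = α := by omega
    show cornerRank G v = (α : ℕ∞)
    rw [hm, hmeq, hfin]

lemma rank_mid_set {α : ℕ} (hrank : graphRank G = (α : ℕ∞)) {j : ℕ} (hj : j < α - 1) :
    {v | cornerRank G v = ((j + 1 : ℕ) : ℕ∞)} = stageAux G j \ stageAux G (j + 1) := by
  ext v
  constructor
  · intro hv
    rcases (rank_attained G hv).1 with h | h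
    · exact ⟨h.1, fun hmem => hmem.2 h⟩
    · exact absurd h.1 (no_early_clique G hrank hj)
  · rintro ⟨h1, h2⟩
    have hc := corner_of_diff G h1 h2
    apply rank_eq_of G (Or.inl hc)
    intro i hi hgood
    rcases hgood with h | h
    · exact not_corner_of_mem_ge G hi h1 h
    · exact no_early_clique G hrank (by omega) h.1

/-! #### The pendant-pair invariant -/

def Inv (G : SimpleGraph V) (j : ℕ) : Prop :=
  ∃ a b a' b' : V, stageAux G j \ stageAux G (j + 1) = {a, b} ∧ a ≠ b ∧ ¬ G.Adj a b ∧
    a' ∈ stageAux G (j + 1) ∧ b' ∈ stageAux G (j + 1) ∧ G.Adj a a' ∧ G.Adj b b' ∧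
    closedNbhd G (stageAux G j) a = {a, a'} ∧ closedNbhd G (stageAux G j) b = {b, b'}

lemma pendant_ssub [Fintype V] {j : ℕ} {a a' : V}
    (haT : a ∈ stageAux G j) (haT2 : a ∉ stageAux G (j + 1))
    (hNa : closedNbhd G (stageAux G j) a = {a, a'}) :
    a' ∈ stageAux G (j + 1) ∧
      closedNbhd G (stageAux G j) a ⊂ closedNbhd G (stageAux G j) a' := by
  obtain ⟨y, hyS, hync, hss⟩ := exists_noncorner_dominator G (corner_of_diff G haT haT2)
  have hy1 : y ∈ stageAux G (j + 1) := ⟨hyS, hync⟩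
  have hay : a ∈ closedNbhd G (stageAux G j) y := hss.subset (self_mem_closedNbhd G haT)
  have hy : y ∈ ({a, a'} : Set V) := by
    rw [← hNa]
    rcases hay.2 with h | h
    · exact absurd (h ▸ hy1) haT2
    · exact ⟨hyS, Or.inr (G.adj_symm h)⟩
  rcases Set.mem_insert_iff.mp hy with h | h
  · exact absurd (h ▸ hy1) haT2
  · rw [Set.mem_singleton_iff] at h
    subst h
    exact ⟨hy1, hss⟩

lemma step_blocking [Fintype V] {j : ℕ} {a a' : V}
    (haT : a ∈ stageAux G (j + 1)) (haT2 : a ∉ stageAux G (j + 2))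
    (hNa : closedNbhd G (stageAux G (j + 1)) a = {a, a'})
    (haa' : G.Adj a a') :
    ∃ t, t ∈ stageAux G j ∧ t ∉ stageAux G (j + 1) ∧ G.Adj t a ∧ ¬ G.Adj t a' := by
  obtain ⟨ha'1, hss⟩ := pendant_ssub G (j := j + 1) haT haT2 hNa
  by_contra hcon
  push_neg at hcon
  have ha'j : a' ∈ stageAux G j :=
    stageAux_succ_subset G j (stageAux_succ_subset G (j + 1) ha'1)
  have haj : a ∈ stageAux G j := stageAux_succ_subset G j haT
  have hsub : closedNbhd G (stageAux G j) a ⊆ closedNbhd G (stageAux G j) a' := by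
    rintro x ⟨hxS, hx⟩
    by_cases hx1 : x ∈ stageAux G (j + 1)
    · have hxN : x ∈ closedNbhd G (stageAux G (j + 1)) a := ⟨hx1, hx⟩
      rw [hNa] at hxN
      rcases Set.mem_insert_iff.mp hxN with h | h
      · subst h; exact ⟨hxS, Or.inr haa'⟩
      · rw [Set.mem_singleton_iff] at h; subst h
        exact self_mem_closedNbhd G hxS
    · rcases hx with h | hadj
      · subst h; exact absurd haT hx1
      · exact ⟨hxS, Or.inr (hcon x hxS hx1 hadj)⟩
  have hssJ : closedNbhd G (stageAux G j) a ⊂ closedNbhd G (stageAux G j) a' := by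
    obtain ⟨s, hs1, hs2⟩ := Set.exists_of_ssubset hss
    rw [Set.ssubset_iff_of_subset hsub]
    refine ⟨s, closedNbhd_mono G (stageAux_succ_subset G j) a' hs1, fun hsmem => ?_⟩
    exact hs2 ⟨hs1.1, hsmem.2⟩
  exact haT.2 ⟨haj, a', ha'j, haa'.ne', hssJ⟩

lemma corner_dom_unique [Fintype V] {j : ℕ} {c a a' : V}
    (hcT : c ∈ stageAux G j) (hcT1 : c ∉ stageAux G (j + 1))
    (haT : a ∈ stageAux G (j + 1)) (ha'T : a' ∈ stageAux G (j + 1))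
    (hNa : closedNbhd G (stageAux G (j + 1)) a = {a, a'})
    (hca : G.Adj c a) (hca' : ¬ G.Adj c a') :
    closedNbhd G (stageAux G j) c ⊆ closedNbhd G (stageAux G j) a := by
  obtain ⟨y, hyS, hync, hss⟩ := exists_noncorner_dominator G (corner_of_diff G hcT hcT1)
  have hy1 : y ∈ stageAux G (j + 1) := ⟨hyS, hync⟩
  have haj : a ∈ stageAux G j := stageAux_succ_subset G j haT
  have haN : a ∈ closedNbhd G (stageAux G j) y := hss.subset ⟨haj, Or.inr (G.adj_symm hca)⟩
  have hyNa : y ∈ closedNbhd G (stageAux G (j + 1)) a := by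
    rcases haN.2 with h | h
    · exact ⟨hy1, Or.inl h.symm⟩
    · exact ⟨hy1, Or.inr (G.adj_symm h)⟩
  rw [hNa] at hyNa
  rcases Set.mem_insert_iff.mp hyNa with h | h
  · subst h; exact hss.subset
  · rw [Set.mem_singleton_iff] at h; subst h
    have hcmem := hss.subset (self_mem_closedNbhd G hcT)
    rcases hcmem.2 with h | h
    · exact absurd (h.symm ▸ ha'T) hcT1
    · exact absurd h hca'

lemma step_core [Fintype V] {j : ℕ} {a b a' b' c d : V}
    (hmid : stageAux G j \ stageAux G (j + 1) = {c, d}) (hcd : c ≠ d)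
    (hab : a ≠ b) (hnadj : ¬ G.Adj a b)
    (haT : a ∈ stageAux G (j + 1)) (hbT : b ∈ stageAux G (j + 1))
    (ha'T : a' ∈ stageAux G (j + 1)) (hb'T : b' ∈ stageAux G (j + 1))
    (hNa : closedNbhd G (stageAux G (j + 1)) a = {a, a'})
    (hNb : closedNbhd G (stageAux G (j + 1)) b = {b, b'})
    (hca : G.Adj c a) (hcna : ¬ G.Adj c a')
    (hdb : G.Adj d b) (hdnb : ¬ G.Adj d b') :
    Inv G j := by
  have hcD : c ∈ stageAux G j \ stageAux G (j + 1) := by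
    rw [hmid]; exact Set.mem_insert _ _
  have hdD : d ∈ stageAux G j \ stageAux G (j + 1) := by
    rw [hmid]; exact Set.mem_insert_of_mem _ rfl
  have h1 := corner_dom_unique G hcD.1 hcD.2 haT ha'T hNa hca hcna
  have h2 := corner_dom_unique G hdD.1 hdD.2 hbT hb'T hNb hdb hdnb
  have haj : a ∈ stageAux G j := stageAux_succ_subset G j haT
  have hbj : b ∈ stageAux G j := stageAux_succ_subset G j hbT
  have hncd : ¬ G.Adj c d := by
    intro h
    have hcb : c = b ∨ G.Adj c b := (h2 ⟨hcD.1, Or.inr h⟩).2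
    have hcb' : G.Adj c b := by
      rcases hcb with h' | h'
      · exact absurd (h' ▸ hcD.2) (by simp [hbT])
      · exact h'
    have hba : b = a ∨ G.Adj b a := (h1 ⟨hbj, Or.inr (G.adj_symm hcb')⟩).2
    rcases hba with h' | h'
    · exact hab h'.symm
    · exact hnadj (G.adj_symm h')
  have hNc : closedNbhd G (stageAux G j) c = {c, a} := by
    ext x
    constructor
    · rintro ⟨hxS, hx⟩
      rcases hx with h | hadj
      · subst h; exact Set.mem_insert _ _
      · have hxa : x = a ∨ G.Adj x a := (h1 ⟨hxS, Or.inr hadj⟩).2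
        rcases hxa with h | hxa
        · subst h; exact Set.mem_insert_of_mem _ rfl
        · by_cases hx1 : x ∈ stageAux G (j + 1)
          · have hmem : x ∈ closedNbhd G (stageAux G (j + 1)) a := ⟨hx1, Or.inr hxa⟩
            rw [hNa] at hmem
            rcases Set.mem_insert_iff.mp hmem with h | h
            · subst h; exact Set.mem_insert_of_mem _ rfl
            · rw [Set.mem_singleton_iff] at h; subst h
              exact absurd (G.adj_symm hadj) hcna
          · have hxD : x ∈ ({c, d} : Set V) := by rw [← hmid]; exact ⟨hxS, hx1⟩
            rcases Set.mem_insert_iff.mp hxD with h | h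
            · subst h; exact Set.mem_insert _ _
            · rw [Set.mem_singleton_iff] at h; subst h
              exact absurd (G.adj_symm hadj) hncd
    · intro hx
      rcases Set.mem_insert_iff.mp hx with h | h
      · subst h; exact self_mem_closedNbhd G hcD.1
      · rw [Set.mem_singleton_iff] at h; subst h
        exact ⟨haj, Or.inr (G.adj_symm hca)⟩
  have hNd : closedNbhd G (stageAux G j) d = {d, b} := by
    ext x
    constructor
    · rintro ⟨hxS, hx⟩
      rcases hx with h | hadj
      · subst h; exact Set.mem_insert _ _
      · have hxb : x = b ∨ G.Adj x b := (h2 ⟨hxS, Or.inr hadj⟩).2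
        rcases hxb with h | hxb
        · subst h; exact Set.mem_insert_of_mem _ rfl
        · by_cases hx1 : x ∈ stageAux G (j + 1)
          · have hmem : x ∈ closedNbhd G (stageAux G (j + 1)) b := ⟨hx1, Or.inr hxb⟩
            rw [hNb] at hmem
            rcases Set.mem_insert_iff.mp hmem with h | h
            · subst h; exact Set.mem_insert_of_mem _ rfl
            · rw [Set.mem_singleton_iff] at h; subst h
              exact absurd (G.adj_symm hadj) hdnb
          · have hxD : x ∈ ({c, d} : Set V) := by rw [← hmid]; exact ⟨hxS, hx1⟩
            rcases Set.mem_insert_iff.mp hxD with h | h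
            · subst h; exact absurd hadj hncd
            · rw [Set.mem_singleton_iff] at h; subst h
              exact Set.mem_insert _ _
    · intro hx
      rcases Set.mem_insert_iff.mp hx with h | h
      · subst h; exact self_mem_closedNbhd G hdD.1
      · rw [Set.mem_singleton_iff] at h; subst h
        exact ⟨hbj, Or.inr (G.adj_symm hdb)⟩
  exact ⟨c, d, a, b, hmid, hcd, hncd, haT, hbT, hca, hdb, hNc, hNd⟩

lemma step_absurd [Fintype V] {j : ℕ} {a b a' c : V}
    (hcD : c ∈ stageAux G j \ stageAux G (j + 1))
    (hab : a ≠ b) (hnadj : ¬ G.Adj a b)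
    (haT : a ∈ stageAux G (j + 1)) (hbT : b ∈ stageAux G (j + 1))
    (ha'T : a' ∈ stageAux G (j + 1))
    (hNa : closedNbhd G (stageAux G (j + 1)) a = {a, a'})
    (hca : G.Adj c a) (hcna : ¬ G.Adj c a') (hcb : G.Adj c b) : False := by
  have h1 := corner_dom_unique G hcD.1 hcD.2 haT ha'T hNa hca hcna
  have hbj : b ∈ stageAux G j := stageAux_succ_subset G j hbT
  have hba : b = a ∨ G.Adj b a := (h1 ⟨hbj, Or.inr (G.adj_symm hcb)⟩).2
  rcases hba with h | h
  · exact hab h.symm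
  · exact hnadj (G.adj_symm h)

lemma step_inv [Fintype V] {j : ℕ} {c d : V}
    (hmid : stageAux G j \ stageAux G (j + 1) = {c, d}) (hcd : c ≠ d)
    (hinv : Inv G (j + 1)) : Inv G j := by
  obtain ⟨a, b, a', b', hset, hab, hnadj, ha', hb', haa', hbb', hNa, hNb⟩ := hinv
  have haD : a ∈ stageAux G (j + 1) \ stageAux G (j + 2) := by
    rw [hset]; exact Set.mem_insert _ _
  have hbD : b ∈ stageAux G (j + 1) \ stageAux G (j + 2) := by
    rw [hset]; exact Set.mem_insert_of_mem _ rfl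
  have ha'T1 : a' ∈ stageAux G (j + 1) := stageAux_succ_subset G (j + 1) ha'
  have hb'T1 : b' ∈ stageAux G (j + 1) := stageAux_succ_subset G (j + 1) hb'
  obtain ⟨t, htj, htj1, hta, htna⟩ := step_blocking G haD.1 haD.2 hNa haa'
  obtain ⟨t', ht'j, ht'j1, ht'b, ht'nb⟩ := step_blocking G hbD.1 hbD.2 hNb hbb'
  have htcd : t ∈ ({c, d} : Set V) := by rw [← hmid]; exact ⟨htj, htj1⟩
  have ht'cd : t' ∈ ({c, d} : Set V) := by rw [← hmid]; exact ⟨ht'j, ht'j1⟩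
  have hcD : c ∈ stageAux G j \ stageAux G (j + 1) := by
    rw [hmid]; exact Set.mem_insert _ _
  have hdD : d ∈ stageAux G j \ stageAux G (j + 1) := by
    rw [hmid]; exact Set.mem_insert_of_mem _ rfl
  rcases Set.mem_insert_iff.mp htcd with ht | ht
  · subst ht
    rcases Set.mem_insert_iff.mp ht'cd with ht' | ht'
    · subst ht'
      exact absurd (step_absurd G hcD hab hnadj haD.1 hbD.1 ha'T1 hNa hta htna ht'b) id
    · rw [Set.mem_singleton_iff] at ht'; subst ht'
      exact step_core G hmid hcd hab hnadj haD.1 hbD.1 ha'T1 hb'T1 hNa hNb hta htna ht'b ht'nb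
  · rw [Set.mem_singleton_iff] at ht; subst ht
    rcases Set.mem_insert_iff.mp ht'cd with ht' | ht'
    · subst ht'
      have hmid' : stageAux G j \ stageAux G (j + 1) = {t, t'} := by
        rw [hmid, Set.pair_comm]
      exact step_core G hmid' hcd.symm hab hnadj haD.1 hbD.1 ha'T1 hb'T1 hNa hNb hta htna
          ht'b ht'nb
    · rw [Set.mem_singleton_iff] at ht'; subst ht'
      exact absurd (step_absurd G hdD hab hnadj haD.1 hbD.1 ha'T1 hNa hta htna ht'b) id

lemma base_inv [Fintype V] {j : ℕ} {u x y : V}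
    (htop : stageAux G (j + 1) = {u})
    (hmid : stageAux G j \ stageAux G (j + 1) = {x, y}) (hxy : x ≠ y) : Inv G j := by
  have hxD : x ∈ stageAux G j \ stageAux G (j + 1) := by
    rw [hmid]; exact Set.mem_insert _ _
  have hyD : y ∈ stageAux G j \ stageAux G (j + 1) := by
    rw [hmid]; exact Set.mem_insert_of_mem _ rfl
  have hu1 : u ∈ stageAux G (j + 1) := by rw [htop]; rfl
  have huj : u ∈ stageAux G j := stageAux_succ_subset G j hu1
  have hTj : stageAux G j = {x, y, u} := by
    have hd := Set.diff_union_of_subset (stageAux_succ_subset G j)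
    rw [hmid, htop] at hd
    rw [← hd]
    ext z
    simp only [Set.mem_union, Set.mem_insert_iff, Set.mem_singleton_iff]
    tauto
  obtain ⟨y1, hy1S, hy1nc, hss1⟩ := exists_noncorner_dominator G (corner_of_diff G hxD.1 hxD.2)
  have hy1mem : y1 ∈ stageAux G (j + 1) := ⟨hy1S, hy1nc⟩
  rw [htop, Set.mem_singleton_iff] at hy1mem
  rw [hy1mem] at hss1
  obtain ⟨y2, hy2S, hy2nc, hss2⟩ := exists_noncorner_dominator G (corner_of_diff G hyD.1 hyD.2)
  have hy2mem : y2 ∈ stageAux G (j + 1) := ⟨hy2S, hy2nc⟩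
  rw [htop, Set.mem_singleton_iff] at hy2mem
  rw [hy2mem] at hss2
  have hxu : G.Adj x u := by
    have := hss1.subset (self_mem_closedNbhd G hxD.1)
    rcases this.2 with h | h
    · exact absurd (h ▸ hu1) hxD.2
    · exact h
  have hyu : G.Adj y u := by
    have := hss2.subset (self_mem_closedNbhd G hyD.1)
    rcases this.2 with h | h
    · exact absurd (h ▸ hu1) hyD.2
    · exact h
  have hnxy : ¬ G.Adj x y := by
    intro h
    have hsub : stageAux G j ⊆ closedNbhd G (stageAux G j) x := by
      intro z hz
      have hz' : z ∈ ({x, y, u} : Set V) := by rw [← hTj]; exact hz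
      rcases Set.mem_insert_iff.mp hz' with h' | h'
      · subst h'; exact self_mem_closedNbhd G hz
      · rcases Set.mem_insert_iff.mp h' with h'' | h''
        · subst h''; exact ⟨hz, Or.inr (G.adj_symm h)⟩
        · rw [Set.mem_singleton_iff] at h''; subst h''
          exact ⟨hz, Or.inr (G.adj_symm hxu)⟩
    exact hss1.not_subset ((closedNbhd_subset G _ u).trans hsub)
  have hNx : closedNbhd G (stageAux G j) x = {x, u} := by
    ext z
    constructor
    · rintro ⟨hzS, hz⟩
      have hz' : z ∈ ({x, y, u} : Set V) := by rw [← hTj]; exact hzS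
      rcases Set.mem_insert_iff.mp hz' with h' | h'
      · subst h'; exact Set.mem_insert _ _
      · rcases Set.mem_insert_iff.mp h' with h'' | h''
        · subst h''
          rcases hz with h3 | h3
          · exact absurd h3 hxy.symm
          · exact absurd h3 (fun hh => hnxy (G.adj_symm hh))
        · rw [Set.mem_singleton_iff] at h''; subst h''
          exact Set.mem_insert_of_mem _ rfl
    · intro hz
      rcases Set.mem_insert_iff.mp hz with h' | h'
      · subst h'; exact self_mem_closedNbhd G hxD.1
      · rw [Set.mem_singleton_iff] at h'; subst h'
        exact ⟨huj, Or.inr (G.adj_symm hxu)⟩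
  have hNy : closedNbhd G (stageAux G j) y = {y, u} := by
    ext z
    constructor
    · rintro ⟨hzS, hz⟩
      have hz' : z ∈ ({x, y, u} : Set V) := by rw [← hTj]; exact hzS
      rcases Set.mem_insert_iff.mp hz' with h' | h'
      · subst h'
        rcases hz with h3 | h3
        · exact absurd h3 hxy
        · exact absurd h3 hnxy
      · rcases Set.mem_insert_iff.mp h' with h'' | h''
        · subst h''; exact Set.mem_insert _ _
        · rw [Set.mem_singleton_iff] at h''; subst h''
          exact Set.mem_insert_of_mem _ rfl
    · intro hz
      rcases Set.mem_insert_iff.mp hz with h' | h'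
      · subst h'; exact self_mem_closedNbhd G hyD.1
      · rw [Set.mem_singleton_iff] at h'; subst h'
        exact ⟨huj, Or.inr (G.adj_symm hyu)⟩
  exact ⟨x, y, u, u, hmid, hxy, hnxy, hu1, hu1, hxu, hyu, hNx, hNy⟩

lemma bottom_false [Fintype V] {w : V}
    (hbot : stageAux G 0 \ stageAux G 1 = {w}) (hinv : Inv G 1) : False := by
  obtain ⟨a, b, a', b', hset, hab, hnadj, ha', hb', haa', hbb', hNa, hNb⟩ := hinv
  have haD : a ∈ stageAux G 1 \ stageAux G 2 := by
    rw [show (2 : ℕ) = 1 + 1 from rfl, hset]; exact Set.mem_insert _ _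
  have hbD : b ∈ stageAux G 1 \ stageAux G 2 := by
    rw [show (2 : ℕ) = 1 + 1 from rfl, hset]; exact Set.mem_insert_of_mem _ rfl
  obtain ⟨t, htj, htj1, hta, htna⟩ := step_blocking G (j := 0) haD.1 haD.2 hNa haa'
  obtain ⟨t', ht'j, ht'j1, ht'b, ht'nb⟩ := step_blocking G (j := 0) hbD.1 hbD.2 hNb hbb'
  have htw : t ∈ ({w} : Set V) := by rw [← hbot]; exact ⟨htj, htj1⟩
  have ht'w : t' ∈ ({w} : Set V) := by rw [← hbot]; exact ⟨ht'j, ht'j1⟩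
  rw [Set.mem_singleton_iff] at htw ht'w
  rw [htw] at hta htna
  rw [ht'w] at ht'b ht'nb
  have hwD : w ∈ stageAux G 0 \ stageAux G 1 := by rw [hbot]; rfl
  obtain ⟨z, hzS, hznc, hss⟩ := exists_noncorner_dominator G (corner_of_diff G hwD.1 hwD.2)
  have hz1 : z ∈ stageAux G 1 := ⟨hzS, hznc⟩
  have hza : z ∈ closedNbhd G (stageAux G 1) a := by
    have hmem : a ∈ closedNbhd G (stageAux G 0) z :=
      hss.subset ⟨Set.mem_univ a, Or.inr (G.adj_symm hta)⟩
    rcases hmem.2 with h | h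
    · exact ⟨hz1, Or.inl h.symm⟩
    · exact ⟨hz1, Or.inr (G.adj_symm h)⟩
  have hzb : z ∈ closedNbhd G (stageAux G 1) b := by
    have hmem : b ∈ closedNbhd G (stageAux G 0) z :=
      hss.subset ⟨Set.mem_univ b, Or.inr (G.adj_symm ht'b)⟩
    rcases hmem.2 with h | h
    · exact ⟨hz1, Or.inl h.symm⟩
    · exact ⟨hz1, Or.inr (G.adj_symm h)⟩
  rw [hNa] at hza
  rw [hNb] at hzb
  rcases Set.mem_insert_iff.mp hza with h | h
  · subst h
    rcases Set.mem_insert_iff.mp hzb with h' | h'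
    · exact hab h'
    · rw [Set.mem_singleton_iff] at h'
      subst h'
      exact hnadj (G.adj_symm hbb')
  · rw [Set.mem_singleton_iff] at h
    subst h
    have hwmem : w ∈ closedNbhd G (stageAux G 0) z :=
      hss.subset (self_mem_closedNbhd G (Set.mem_univ w))
    rcases hwmem.2 with h' | h'
    · exact hwD.2 (h' ▸ hz1)
    · exact htna h'

lemma alpha2_false [Fintype V] {u w : V}
    (htop : stageAux G 1 = {u})
    (hbot : stageAux G 0 \ stageAux G 1 = {w}) : False := by
  have hwD : w ∈ stageAux G 0 \ stageAux G 1 := by rw [hbot]; rfl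
  obtain ⟨z, hzS, hznc, hss⟩ := exists_noncorner_dominator G (corner_of_diff G hwD.1 hwD.2)
  have hz1 : z ∈ stageAux G 1 := ⟨hzS, hznc⟩
  rw [htop, Set.mem_singleton_iff] at hz1
  rw [hz1] at hss
  have hu1 : u ∈ stageAux G 1 := by rw [htop]; rfl
  have hwu : G.Adj w u := by
    have := hss.subset (self_mem_closedNbhd G (Set.mem_univ w))
    rcases this.2 with h | h
    · exact absurd (h ▸ hu1) hwD.2
    · exact h
  have huniv : stageAux G 0 = {w, u} := by
    have hd := Set.diff_union_of_subset (stageAux_succ_subset G 0)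
    rw [hbot, htop] at hd
    rw [← hd, Set.singleton_union]
  have hsub : closedNbhd G (stageAux G 0) u ⊆ closedNbhd G (stageAux G 0) w := by
    rintro zz ⟨hzzS, hzz⟩
    have hzz' : zz ∈ ({w, u} : Set V) := by rw [← huniv]; exact hzzS
    rcases Set.mem_insert_iff.mp hzz' with h | h
    · subst h; exact self_mem_closedNbhd G hzzS
    · rw [Set.mem_singleton_iff] at h; subst h
      exact ⟨hzzS, Or.inr (G.adj_symm hwu)⟩
  exact hss.not_subset hsub

end Statement9

end CopsRobbers
/-- for `α ≥ 2`, the vector `(1, 2, …, 2, 1)` of length `α` is not realizable. -/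
theorem CopsRobbers.one_twos_one_not_realizable (α : ℕ) (hα : 2 ≤ α) :
    ¬ CopsRobbers.Realizable (1 :: (List.replicate (α - 2) 2 ++ [1])) := by
  rintro ⟨W, instW, G, hcop, hrank, hcard⟩
  classical
  set L : List ℕ := 1 :: (List.replicate (α - 2) 2 ++ [1]) with hL
  have hlen : L.length = α := by
    simp only [hL, List.length_cons, List.length_append, List.length_replicate,
      List.length_nil]
    omega
  have hrank' : graphRank G = (α : ℕ∞) := by rw [hrank, hlen]
  have key : ∀ (i : ℕ) (h : i < L.length),
      L[i]'h = {v | cornerRank G v = ((L.length - i : ℕ) : ℕ∞)}.ncard := by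
    intro i h
    simpa using hcard ⟨i, h⟩
  have hval2 : ∀ (i : ℕ) (h : i + 1 < L.length), i < α - 2 → L[i + 1]'h = 2 := by
    intro i h hi
    have hrep : i < (List.replicate (α - 2) 2).length := by
      simp only [List.length_replicate]; omega
    simp only [hL, List.getElem_cons_succ]
    rw [List.getElem_append_left hrep]
    simp
  have hval1 : ∀ (h : (α - 2) + 1 < L.length), L[(α - 2) + 1]'h = 1 := by
    intro h
    have hrep : (List.replicate (α - 2) 2).length ≤ α - 2 := by
      simp only [List.length_replicate]; omega
    simp only [hL, List.getElem_cons_succ]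
    rw [List.getElem_append_right hrep]
    simp
  have htopcard : (stageAux G (α - 1)).ncard = 1 := by
    have h0lt : 0 < L.length := by rw [hlen]; omega
    have h0 := key 0 h0lt
    have hv : L[0]'h0lt = 1 := rfl
    rw [hv] at h0
    have e : ((L.length - 0 : ℕ) : ℕ∞) = (α : ℕ∞) := by
      rw [hlen]; norm_num
    rw [e] at h0
    rw [← rank_top_set G hcop hrank' hα]
    exact h0.symm
  have hmidcard : ∀ j, 1 ≤ j → j ≤ α - 2 →
      (stageAux G j \ stageAux G (j + 1)).ncard = 2 := by
    intro j h1 h2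
    have hilt : (α - 2 - j) + 1 < L.length := by rw [hlen]; omega
    have h0 := key ((α - 2 - j) + 1) hilt
    rw [hval2 (α - 2 - j) hilt (by omega)] at h0
    have e : ((L.length - ((α - 2 - j) + 1) : ℕ) : ℕ∞) = ((j + 1 : ℕ) : ℕ∞) := by
      rw [hlen]; congr 1; omega
    rw [e] at h0
    rw [← rank_mid_set G hrank' (show j < α - 1 by omega)]
    exact h0.symm
  have hbotcard : (stageAux G 0 \ stageAux G 1).ncard = 1 := by
    have hilt : (α - 2) + 1 < L.length := by rw [hlen]; omega
    have h0 := key ((α - 2) + 1) hilt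
    rw [hval1 hilt] at h0
    have e : ((L.length - ((α - 2) + 1) : ℕ) : ℕ∞) = ((0 + 1 : ℕ) : ℕ∞) := by
      rw [hlen]; congr 1; omega
    rw [e] at h0
    have := rank_mid_set G hrank' (show 0 < α - 1 by omega)
    rw [this] at h0
    norm_num at h0
    exact h0.symm
  obtain ⟨u, htopset⟩ := Set.ncard_eq_one.mp htopcard
  obtain ⟨w, hbotset⟩ := Set.ncard_eq_one.mp hbotcard
  rcases eq_or_lt_of_le hα with hα2 | hα3
  · obtain rfl := hα2.symm
    exact alpha2_false G (show stageAux G 1 = {u} from htopset) hbotset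
  · have hdown : ∀ n j, 1 ≤ j → j + n = α - 2 → Inv G j := by
      intro n
      induction n with
      | zero =>
        intro j h1 hj
        have hj' : j = α - 2 := by omega
        subst hj'
        obtain ⟨xx, yy, hxy, hset⟩ := Set.ncard_eq_two.mp (hmidcard (α - 2) h1 le_rfl)
        refine base_inv G (u := u) ?_ hset hxy
        rw [show (α - 2) + 1 = α - 1 by omega]
        exact htopset
      | succ n ih =>
        intro j h1 hj
        have hInv1 : Inv G (j + 1) := ih (j + 1) (by omega) (by omega)
        obtain ⟨xx, yy, hxy, hset⟩ := Set.ncard_eq_two.mp (hmidcard j h1 (by omega))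
        exact step_inv G hset hxy hInv1
    exact bottom_false G hbotset (hdown (α - 2 - 1) 1 le_rfl (by omega))
end
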